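/- Let S be a standard Borel space, p a probability measure on S, and μ a shift-invariant probability measure on S^{Z^d} with finite specific entropy, ℐ(μ) < ∞. Then for every finite subset Λ ⊂ Z^d the relative entropy I(μ_Λ; p^{⊗Λ}) is finite; in particular μ_Λ is absolutely continuous with respect to p^{⊗Λ}. -/

import Mathlib

open MeasureTheory Filter
open scoped ENNReal

/-- The lattice `ℤ^d`. -/
abbrev Zd (d : ℕ) := Fin d → ℤ

/-- The shift by vector `-i` on the configuration space `S^{ℤ^d}`:
`(θ_i ω)_j = ω_{j+i}`. -/
def shift (S : Type*) {d : ℕ} (i : Zd d) (ω : Zd d → S) : Zd d → S :=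
  fun j => ω (j + i)

/-- A measure on `S^{ℤ^d}` is shift-invariant if it is invariant under all shifts. -/
def ShiftInvariant {S : Type*} [MeasurableSpace S] {d : ℕ}
    (μ : Measure (Zd d → S)) : Prop :=
  ∀ i : Zd d, μ.map (shift S i) = μ

/-- The cube `Λ_n = {-n, …, n-1}^d` as a finite subset of `ℤ^d`. -/
noncomputable def cube (d n : ℕ) : Finset (Zd d) :=
  Finset.Icc (fun _ => -(n : ℤ)) (fun _ => (n : ℤ) - 1)

/-- The marginal of `μ` on the coordinates in `Λ`. -/
noncomputable def marginal {S : Type*} [MeasurableSpace S] {d : ℕ}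
    (μ : Measure (Zd d → S)) (Λ : Finset (Zd d)) : Measure (Λ → S) :=
  μ.map (fun ω (j : Λ) => ω j)

open Classical in
/-- The relative entropy `I(μ;ν) = ∫ log(dμ/dν) dμ` if `μ ≪ ν` (and the integral
makes sense), `+∞` otherwise. -/
noncomputable def relEnt {α : Type*} [MeasurableSpace α] (μ ν : Measure α) : ℝ≥0∞ :=
  if μ ≪ ν ∧ Integrable (llr μ ν) μ then ENNReal.ofReal (∫ x, llr μ ν x ∂μ) else ⊤

/-- The specific entropy of `μ` relative to the reference product measure `p^{⊗ℤ^d}`: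
`ℐ(μ) = limsup_n (1/(2n)^d) I(μ_{Λ_n}; p^{⊗Λ_n})`. -/
noncomputable def specEnt {S : Type*} [MeasurableSpace S] {d : ℕ}
    (p : Measure S) (μ : Measure (Zd d → S)) : ℝ≥0∞ :=
  Filter.limsup
    (fun n : ℕ =>
      relEnt (marginal μ (cube d n)) (Measure.pi fun _ : cube d n => p)
        / ((2 * n : ℝ≥0∞) ^ d))
    Filter.atTop


section Aux

lemma abs_eq_max_add_max (r : ℝ) : |r| = max r 0 + max (-r) 0 := by
  rcases le_total r 0 with h | h
  · rw [abs_of_nonpos h, max_eq_right h, max_eq_left (by linarith), zero_add]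
  · rw [abs_of_nonneg h, max_eq_left h, max_eq_right (by linarith), add_zero]

lemma mul_max_neg_log_le (t : ℝ) (ht : 0 ≤ t) : t * max (-Real.log t) 0 ≤ 2 := by
  rcases eq_or_lt_of_le ht with h0 | h0
  · simp [← h0]
  rcases le_or_gt 1 t with h1 | h1
  · have hl : 0 ≤ Real.log t := Real.log_nonneg h1
    rw [max_eq_right (by linarith)]
    norm_num
  · have hl : Real.log t < 0 := Real.log_neg h0 h1
    rw [max_eq_left (by linarith)]
    have hs : 0 < Real.sqrt t := Real.sqrt_pos.2 h0
    have h2 : Real.log (Real.sqrt t)⁻¹ ≤ (Real.sqrt t)⁻¹ - 1 :=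
      Real.log_le_sub_one_of_pos (by positivity)
    have h3 : -Real.log t = 2 * Real.log (Real.sqrt t)⁻¹ := by
      rw [Real.log_inv, Real.log_sqrt ht]; ring
    have h4 : t * -Real.log t ≤ t * (2 * ((Real.sqrt t)⁻¹ - 1)) := by
      rw [h3]; exact mul_le_mul_of_nonneg_left (by linarith) ht
    have h5 : t * (2 * ((Real.sqrt t)⁻¹ - 1)) = 2 * (t / Real.sqrt t) - 2 * t := by
      rw [div_eq_mul_inv]; ring
    have h6 : t / Real.sqrt t = Real.sqrt t := Real.div_sqrt
    have h7 : Real.sqrt t ≤ 1 := by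
      rw [show (1 : ℝ) = Real.sqrt 1 by simp]
      exact Real.sqrt_le_sqrt h1.le
    calc t * -Real.log t ≤ 2 * (t / Real.sqrt t) - 2 * t := by rw [← h5]; exact h4
      _ = 2 * Real.sqrt t - 2 * t := by rw [h6]
      _ ≤ 2 := by linarith

/-- The positive part of `t ↦ t log t`, as a function `ℝ≥0∞ → ℝ≥0∞`. -/
noncomputable def Psi (t : ℝ≥0∞) : ℝ≥0∞ :=
  ENNReal.ofReal (t.toReal * max (Real.log t.toReal) 0)

lemma measurable_psi : Measurable Psi :=
  ENNReal.measurable_ofReal.comp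
    (ENNReal.measurable_toReal.mul
      ((Real.measurable_log.comp ENNReal.measurable_toReal).max measurable_const))

lemma psi_le (t : ℝ≥0∞) : Psi t ≤ t * ↑‖Real.log t.toReal‖₊ := by
  rcases eq_or_ne t ⊤ with rfl | ht
  · simp [Psi]
  obtain ⟨s, hs0, rfl⟩ : ∃ s : ℝ, 0 ≤ s ∧ t = ENNReal.ofReal s :=
    ⟨t.toReal, ENNReal.toReal_nonneg, (ENNReal.ofReal_toReal ht).symm⟩
  simp only [Psi]
  rw [← enorm_eq_nnnorm, Real.enorm_eq_ofReal_abs, ← ENNReal.ofReal_mul hs0]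
  have h1 : (ENNReal.ofReal s).toReal = s := ENNReal.toReal_ofReal hs0
  rw [h1]
  refine ENNReal.ofReal_le_ofReal (mul_le_mul_of_nonneg_left ?_ hs0)
  exact max_le (le_abs_self _) (abs_nonneg _)

lemma mul_ennnorm_log_le (t : ℝ≥0∞) (ht : t ≠ ⊤) :
    t * ↑‖Real.log t.toReal‖₊ ≤ Psi t + ENNReal.ofReal 2 := by
  obtain ⟨s, hs0, rfl⟩ : ∃ s : ℝ, 0 ≤ s ∧ t = ENNReal.ofReal s :=
    ⟨t.toReal, ENNReal.toReal_nonneg, (ENNReal.ofReal_toReal ht).symm⟩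
  have h1 : (ENNReal.ofReal s).toReal = s := ENNReal.toReal_ofReal hs0
  simp only [Psi]
  rw [← enorm_eq_nnnorm, Real.enorm_eq_ofReal_abs, ← ENNReal.ofReal_mul hs0, h1,
    abs_eq_max_add_max, mul_add, ENNReal.ofReal_add
      (mul_nonneg hs0 (le_max_right _ _)) (mul_nonneg hs0 (le_max_right _ _))]
  exact add_le_add_right (ENNReal.ofReal_le_ofReal (mul_max_neg_log_le s hs0)) _

/-- Jensen's inequality for the positive part of `t log t`. -/
lemma psi_lintegral_le {γ : Type*} [MeasurableSpace γ] (q : Measure γ)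
    [IsProbabilityMeasure q] {h : γ → ℝ≥0∞} (hm : Measurable h)
    (hfin : ∫⁻ y, h y ∂q ≠ ⊤) (hae : ∀ᵐ y ∂q, h y ≠ ⊤) :
    Psi (∫⁻ y, h y ∂q) ≤ ∫⁻ y, Psi (h y) ∂q := by
  by_cases htop : ∫⁻ y, Psi (h y) ∂q = ⊤
  · exact htop ▸ le_top
  set h' : γ → ℝ := fun y => (h y).toReal with hh'
  have hm' : Measurable h' := ENNReal.measurable_toReal.comp hm
  have hint : Integrable h' q := integrable_toReal_of_lintegral_ne_top hm.aemeasurable hfin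
  set u : γ → ℝ := fun y => h' y * max (Real.log (h' y)) 0 with hu
  have hu_meas : Measurable u :=
    hm'.mul ((Real.measurable_log.comp hm').max measurable_const)
  have hu_nonneg : ∀ y, 0 ≤ u y := fun y =>
    mul_nonneg ENNReal.toReal_nonneg (le_max_right _ _)
  have hPsi_eq : ∀ y, Psi (h y) = ENNReal.ofReal (u y) := fun y => rfl
  have hu_int : Integrable u q := by
    have := integrable_toReal_of_lintegral_ne_top
      (ENNReal.measurable_ofReal.comp hu_meas).aemeasurable
      (by simpa [← hPsi_eq] using htop)
    refine this.congr (Filter.Eventually.of_forall fun y => ?_)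
    exact ENNReal.toReal_ofReal (hu_nonneg y)
  have hφ_bound : ∀ y, |h' y * Real.log (h' y)| ≤ u y + 2 := by
    intro y
    have ht0 : 0 ≤ h' y := ENNReal.toReal_nonneg
    rw [abs_mul, abs_of_nonneg ht0, abs_eq_max_add_max, mul_add]
    exact add_le_add_right (mul_max_neg_log_le _ ht0) _
  have hφ_int : Integrable ((fun x => x * Real.log x) ∘ h') q := by
    refine (hu_int.add (integrable_const 2)).mono'
      ((hm'.mul (Real.measurable_log.comp hm')).aestronglyMeasurable)
      (Filter.Eventually.of_forall fun y => ?_)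
    simp only [Function.comp_apply, Real.norm_eq_abs]
    exact hφ_bound y
  have hjensen :
      (∫ y, h' y ∂q) * Real.log (∫ y, h' y ∂q) ≤ ∫ y, h' y * Real.log (h' y) ∂q :=
    Real.convexOn_mul_log.map_integral_le Real.continuous_mul_log.continuousOn
      isClosed_Ici (Filter.Eventually.of_forall fun y => ENNReal.toReal_nonneg) hint hφ_int
  have hintegral : ∫ y, h' y ∂q = (∫⁻ y, h y ∂q).toReal :=
    integral_toReal hm.aemeasurable (hae.mono fun y hy => lt_top_iff_ne_top.2 hy)
  rw [hintegral] at hjensen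
  set m : ℝ := (∫⁻ y, h y ∂q).toReal with hm0
  rcases le_or_gt m 1 with hm1 | hm1
  · have hmax : max (Real.log m) 0 = 0 :=
      max_eq_right (Real.log_nonpos ENNReal.toReal_nonneg hm1)
    simp only [Psi]
    rw [← hm0, hmax, mul_zero, ENNReal.ofReal_zero]
    exact zero_le
  · have hmax : max (Real.log m) 0 = Real.log m := max_eq_left (Real.log_nonneg hm1.le)
    have hptwise : ∀ y, h' y * Real.log (h' y) ≤ u y := fun y =>
      mul_le_mul_of_nonneg_left (le_max_left _ _) ENNReal.toReal_nonneg
    have h2 : m * Real.log m ≤ ∫ y, u y ∂q :=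
      hjensen.trans (integral_mono hφ_int hu_int hptwise)
    calc Psi (∫⁻ y, h y ∂q) = ENNReal.ofReal (m * Real.log m) := by
          simp only [Psi]; rw [← hm0, hmax]
      _ ≤ ENNReal.ofReal (∫ y, u y ∂q) := ENNReal.ofReal_le_ofReal h2
      _ = ∫⁻ y, ENNReal.ofReal (u y) ∂q :=
          ofReal_integral_eq_lintegral_ofReal hu_int
            (Filter.Eventually.of_forall hu_nonneg)
      _ = ∫⁻ y, Psi (h y) ∂q := by simp_rw [hPsi_eq]

lemma marginal_isProbability {S : Type*} [MeasurableSpace S] {d : ℕ}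
    (μ : Measure (Zd d → S)) [IsProbabilityMeasure μ] (Λ : Finset (Zd d)) :
    IsProbabilityMeasure (marginal μ Λ) :=
  Measure.isProbabilityMeasure_map
    ((measurable_pi_lambda _ fun j => measurable_pi_apply _).aemeasurable)

/-- The key monotonicity step: finiteness of relative entropy passes to sub-volumes. -/
lemma key_step {d : ℕ} {S : Type*} [MeasurableSpace S] (p : Measure S)
    [IsProbabilityMeasure p] (μ : Measure (Zd d → S)) [IsProbabilityMeasure μ]
    {Λ Λ' : Finset (Zd d)} (hsub : Λ ⊆ Λ')
    (hac' : marginal μ Λ' ≪ Measure.pi (fun _ : Λ' => p))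
    (hint' : Integrable (llr (marginal μ Λ') (Measure.pi fun _ : Λ' => p)) (marginal μ Λ')) :
    marginal μ Λ ≪ Measure.pi (fun _ : Λ => p) ∧
      Integrable (llr (marginal μ Λ) (Measure.pi fun _ : Λ => p)) (marginal μ Λ) := by
  classical
  haveI : IsProbabilityMeasure (marginal μ Λ') := marginal_isProbability μ Λ'
  haveI : IsProbabilityMeasure (marginal μ Λ) := marginal_isProbability μ Λ
  set ν' : Measure (↥Λ' → S) := Measure.pi (fun _ : Λ' => p) with hν'def
  set ν : Measure (↥Λ → S) := Measure.pi (fun _ : Λ => p) with hνdef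
  set P : ↥Λ' → Prop := fun i => (i : Zd d) ∈ Λ with hPdef
  let pe := MeasurableEquiv.piEquivPiSubtypeProd (fun _ : Λ' => S) P
  set ν₁ : Measure (Subtype P → S) := Measure.pi (fun _ : Subtype P => p) with hν₁def
  set q : Measure ({i : Λ' // ¬ P i} → S) := Measure.pi (fun _ : {i : Λ' // ¬ P i} => p)
    with hqdef
  have hpe : MeasurePreserving pe ν' (ν₁.prod q) :=
    measurePreserving_piEquivPiSubtypeProd (fun _ : Λ' => p) P
  set ν₂ : Measure _ := ν₁.prod q with hν₂def
  have hν₂ : ν'.map pe = ν₂ := hpe.map_eq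
  have hproj' : Measurable (fun (ω : Zd d → S) (j : Λ') => ω (j : Zd d)) :=
    measurable_pi_lambda _ fun j => measurable_pi_apply _
  set f : _ → ℝ≥0∞ := (marginal μ Λ').rnDeriv ν' with hfdef
  have hf_meas : Measurable f := Measure.measurable_rnDeriv _ _
  have hμ'_eq : marginal μ Λ' = ν'.withDensity f :=
    (Measure.withDensity_rnDeriv_eq _ _ hac').symm
  set f₂ : _ → ℝ≥0∞ := fun z => f (pe.symm z) with hf₂def
  have hf₂_meas : Measurable f₂ := hf_meas.comp pe.symm.measurable
  have hμ₂ : (marginal μ Λ').map pe = ν₂.withDensity f₂ := by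
    rw [hμ'_eq, ← hν₂]
    refine Measure.ext fun A hA => ?_
    rw [Measure.map_apply pe.measurable hA, withDensity_apply _ (pe.measurable hA),
      withDensity_apply _ hA, setLIntegral_map hA hf₂_meas pe.measurable]
    exact lintegral_congr fun ω => by simp [hf₂def]
  set g : (Subtype P → S) → ℝ≥0∞ := fun x => ∫⁻ y, f₂ (x, y) ∂q with hgdef
  have hg_meas : Measurable g := hf₂_meas.lintegral_prod_right'
  have hfst : ((marginal μ Λ').map pe).map Prod.fst = ν₁.withDensity g := by
    refine Measure.ext fun A hA => ?_
    rw [Measure.map_apply measurable_fst hA, hμ₂,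
      withDensity_apply _ (measurable_fst hA), withDensity_apply _ hA]
    have hpre : Prod.fst ⁻¹' A = A ×ˢ (Set.univ : Set ({i : Λ' // ¬ P i} → S)) := by
      ext z; simp
    rw [hpre, hν₂def, ← Measure.prod_restrict, Measure.restrict_univ,
      lintegral_prod _ hf₂_meas.aemeasurable]
  -- the reindexing equivalence
  set r : ↥Λ ≃ Subtype P :=
    { toFun := fun j => ⟨⟨(j : Zd d), hsub j.2⟩, j.2⟩
      invFun := fun i => ⟨(i.1 : Zd d), i.2⟩
      left_inv := fun j => rfl
      right_inv := fun i => rfl } with hrdef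
  set E : (Subtype P → S) ≃ᵐ (↥Λ → S) :=
    { toEquiv :=
        { toFun := fun σ j => σ (r j)
          invFun := fun τ i => τ (r.symm i)
          left_inv := fun σ => funext fun i => congrArg σ (r.apply_symm_apply i)
          right_inv := fun τ => funext fun j => congrArg τ (r.symm_apply_apply j) }
      measurable_toFun := measurable_pi_lambda _ fun j => measurable_pi_apply _
      measurable_invFun := measurable_pi_lambda _ fun i => measurable_pi_apply _ } with hEdef
  have hνE : ν₁.map E = ν := by
    rw [hνdef]
    refine (Measure.pi_eq fun s hs => ?_).symm
    rw [Measure.map_apply E.measurable (MeasurableSet.univ_pi hs)]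
    have hEpre : ⇑E ⁻¹' Set.pi Set.univ s = Set.pi Set.univ (fun i => s (r.symm i)) := by
      ext σ
      simp only [Set.mem_preimage, Set.mem_univ_pi]
      constructor
      · intro hmem i
        have := hmem (r.symm i)
        rwa [show E σ (r.symm i) = σ i from congrArg σ (r.apply_symm_apply i)] at this
      · intro hmem j
        have := hmem (r j)
        rwa [r.symm_apply_apply] at this
    rw [hEpre, Measure.pi_pi]
    exact (Fintype.prod_equiv r.symm _ _ fun i => rfl)
  have hmargT : marginal μ Λ = (((marginal μ Λ').map pe).map Prod.fst).map E := by
    rw [marginal, marginal, Measure.map_map pe.measurable hproj',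
      Measure.map_map measurable_fst (pe.measurable.comp hproj'),
      Measure.map_map E.measurable (measurable_fst.comp (pe.measurable.comp hproj'))]
    rfl
  set G : (↥Λ → S) → ℝ≥0∞ := fun x => g (E.symm x) with hGdef
  have hG_meas : Measurable G := hg_meas.comp E.symm.measurable
  have hmarg : marginal μ Λ = ν.withDensity G := by
    rw [hmargT, hfst, ← hνE]
    refine Measure.ext fun A hA => ?_
    rw [Measure.map_apply E.measurable hA, withDensity_apply _ (E.measurable hA),
      withDensity_apply _ hA, setLIntegral_map hA hG_meas E.measurable]
    exact lintegral_congr fun x => by simp [hGdef]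
  have hacΛ : marginal μ Λ ≪ ν := by
    rw [hmarg]; exact withDensity_absolutelyContinuous ν G
  refine ⟨hacΛ, ?_⟩
  -- identification of llr
  have hrn : (marginal μ Λ).rnDeriv ν =ᵐ[ν] G := by
    rw [hmarg]; exact Measure.rnDeriv_withDensity ν hG_meas
  have hllr : llr (marginal μ Λ) ν =ᵐ[marginal μ Λ]
      fun x => Real.log (G x).toReal := by
    filter_upwards [hacΛ.ae_eq hrn] with x hx
    simp only [llr_def]
    rw [hx]
  rw [integrable_congr hllr]
  -- finiteness facts
  have hGint : ∫⁻ x, G x ∂ν = 1 := by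
    have h1 : (ν.withDensity G) Set.univ = ∫⁻ x, G x ∂ν := by
      rw [withDensity_apply _ MeasurableSet.univ, Measure.restrict_univ]
    rw [← h1, ← hmarg, measure_univ]
  have hG_fin : ∀ᵐ x ∂ν, G x ≠ ⊤ :=
    (ae_lt_top hG_meas (by rw [hGint]; exact ENNReal.one_ne_top)).mono fun x hx => hx.ne
  have hgint : ∫⁻ x, g x ∂ν₁ = 1 := by
    rw [← hνE] at hGint
    rw [← hGint, lintegral_map (f := G) hG_meas E.measurable]
    exact lintegral_congr fun x => by simp [hGdef]
  have hg_fin : ∀ᵐ x ∂ν₁, g x ≠ ⊤ :=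
    (ae_lt_top hg_meas (by rw [hgint]; exact ENNReal.one_ne_top)).mono fun x hx => hx.ne
  have hf₂_fin : ∀ᵐ z ∂ν₂, f₂ z ≠ ⊤ := by
    rw [← hν₂]
    have hset : MeasurableSet {z | f₂ z ≠ ⊤} :=
      (hf₂_meas (measurableSet_singleton ⊤)).compl
    rw [ae_map_iff pe.measurable.aemeasurable hset]
    filter_upwards [Measure.rnDeriv_lt_top (marginal μ Λ') ν'] with ω hω
    simpa [hf₂def] using hω.ne
  have hf₂_fin' : ∀ᵐ x ∂ν₁, ∀ᵐ y ∂q, f₂ (x, y) ≠ ⊤ :=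
    Measure.ae_ae_of_ae_prod hf₂_fin
  -- Jensen step
  have hjensen : ∫⁻ x, Psi (g x) ∂ν₁ ≤ ∫⁻ z, Psi (f₂ z) ∂ν₂ := by
    rw [hν₂def, lintegral_prod (fun z => Psi (f₂ z))
      ((measurable_psi.comp hf₂_meas).aemeasurable : AEMeasurable (fun z => Psi (f₂ z)) _)]
    refine lintegral_mono_ae ?_
    filter_upwards [hg_fin, hf₂_fin'] with x hx1 hx2
    exact psi_lintegral_le q (hf₂_meas.comp measurable_prodMk_left) hx1 hx2
  have hPsif : ∫⁻ z, Psi (f₂ z) ∂ν₂ = ∫⁻ ω, Psi (f ω) ∂ν' := by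
    rw [← hν₂, lintegral_map (f := fun z => Psi (f₂ z))
      (measurable_psi.comp hf₂_meas) pe.measurable]
    exact lintegral_congr fun ω => by simp [hf₂def]
  have hfinal : ∫⁻ ω, f ω * ↑‖Real.log (f ω).toReal‖₊ ∂ν' < ⊤ := by
    have h1 : ∫⁻ ω, ↑‖llr (marginal μ Λ') ν' ω‖₊ ∂(marginal μ Λ') < ⊤ :=
      hint'.hasFiniteIntegral
    have h2 : ∫⁻ ω, ↑‖llr (marginal μ Λ') ν' ω‖₊ ∂(ν'.withDensity f)
        = ∫⁻ ω, f ω * ↑‖Real.log (f ω).toReal‖₊ ∂ν' := by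
      rw [lintegral_withDensity_eq_lintegral_mul ν' hf_meas
        ((measurable_llr _ _).nnnorm.coe_nnreal_ennreal)]
      exact lintegral_congr fun ω => by simp [llr_def, hfdef]
    rw [← hμ'_eq] at h2
    rwa [h2] at h1
  -- conclude integrability
  constructor
  · exact ((Real.measurable_log.comp
      (ENNReal.measurable_toReal.comp hG_meas)).aestronglyMeasurable)
  · show ∫⁻ x, ↑‖Real.log (G x).toReal‖₊ ∂(marginal μ Λ) < ⊤
    have hN_meas : Measurable fun x => (‖Real.log (G x).toReal‖₊ : ℝ≥0∞) :=
      (Real.measurable_log.comp (ENNReal.measurable_toReal.comp hG_meas)).nnnorm.coe_nnreal_ennreal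
    calc ∫⁻ x, ↑‖Real.log (G x).toReal‖₊ ∂(marginal μ Λ)
        = ∫⁻ x, (G * fun x => (‖Real.log (G x).toReal‖₊ : ℝ≥0∞)) x ∂ν := by
          rw [hmarg, lintegral_withDensity_eq_lintegral_mul ν hG_meas hN_meas]
      _ ≤ ∫⁻ x, (Psi (G x) + ENNReal.ofReal 2) ∂ν := by
          refine lintegral_mono_ae ?_
          filter_upwards [hG_fin] with x hx
          simpa using mul_ennnorm_log_le (G x) hx
      _ = ∫⁻ x, Psi (G x) ∂ν + ENNReal.ofReal 2 := by
          rw [lintegral_add_right _ measurable_const, lintegral_const, measure_univ, mul_one]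
      _ = ∫⁻ x, Psi (g x) ∂ν₁ + ENNReal.ofReal 2 := by
          rw [← hνE, lintegral_map (f := fun x => Psi (G x))
            (measurable_psi.comp hG_meas) E.measurable]
          congr 1
      _ ≤ ∫⁻ z, Psi (f₂ z) ∂ν₂ + ENNReal.ofReal 2 := add_le_add_left hjensen _
      _ = ∫⁻ ω, Psi (f ω) ∂ν' + ENNReal.ofReal 2 := by rw [hPsif]
      _ ≤ ∫⁻ ω, f ω * ↑‖Real.log (f ω).toReal‖₊ ∂ν' + ENNReal.ofReal 2 :=
          add_le_add_left (lintegral_mono fun ω => psi_le (f ω)) _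
      _ < ⊤ := ENNReal.add_lt_top.2 ⟨hfinal, ENNReal.ofReal_lt_top⟩

end Aux

/-- If a shift-invariant probability measure `μ` on `S^{ℤ^d}` has finite
specific entropy, then every finite-volume marginal has finite relative entropy with
respect to the product reference measure; in particular it is absolutely continuous. -/
theorem relEnt_marginal_lt_top_of_specEnt_lt_top
    {d : ℕ} (hd : 1 ≤ d) {S : Type*} [MeasurableSpace S] [StandardBorelSpace S]
    (p : Measure S) [IsProbabilityMeasure p]
    (μ : Measure (Zd d → S)) [IsProbabilityMeasure μ] (hinv : ShiftInvariant μ)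
    (hent : specEnt p μ < ⊤) :
    ∀ Λ : Finset (Zd d),
      relEnt (marginal μ Λ) (Measure.pi fun _ : Λ => p) < ⊤ ∧
      marginal μ Λ ≪ Measure.pi (fun _ : Λ => p) := by
  intro Λ
  -- eventually, the relative entropy of the cube marginal is finite
  have h1 : ∀ᶠ n in atTop,
      relEnt (marginal μ (cube d n)) (Measure.pi fun _ : cube d n => p)
        / ((2 * n : ℝ≥0∞) ^ d) < ⊤ :=
    Filter.eventually_lt_of_limsup_lt hent
  -- eventually, `Λ ⊆ cube d n`
  have h2 : ∀ᶠ n in atTop, Λ ⊆ cube d n := by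
    rw [Filter.eventually_atTop]
    refine ⟨(Λ.sup fun j => Finset.univ.sup fun k => (j k).natAbs) + 1, fun n hn => ?_⟩
    intro j hj
    rw [cube, Finset.mem_Icc]
    have hkey : ∀ k, (j k).natAbs < n := by
      intro k
      have hk1 : (j k).natAbs ≤ Finset.univ.sup fun k => (j k).natAbs :=
        Finset.le_sup (f := fun k => (j k).natAbs) (Finset.mem_univ k)
      have hk2 : (Finset.univ.sup fun k => (j k).natAbs)
          ≤ Λ.sup fun j => Finset.univ.sup fun k => (j k).natAbs :=
        Finset.le_sup (f := fun j => Finset.univ.sup fun k => (j k).natAbs) hj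
      exact lt_of_le_of_lt (hk1.trans hk2) (Nat.lt_of_succ_le hn)
    constructor
    · intro k
      show -(n : ℤ) ≤ j k
      have h3 : ((j k).natAbs : ℤ) < (n : ℤ) := by exact_mod_cast hkey k
      have h4 : -((j k).natAbs : ℤ) ≤ j k := by
        rw [← Int.abs_eq_natAbs]; exact neg_abs_le _
      exact le_trans (neg_le_neg h3.le) h4
    · intro k
      show j k ≤ (n : ℤ) - 1
      have h3 : ((j k).natAbs : ℤ) < (n : ℤ) := by exact_mod_cast hkey k
      have h4 : j k ≤ ((j k).natAbs : ℤ) := by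
        rw [← Int.abs_eq_natAbs]; exact le_abs_self _
      exact h4.trans (Int.le_sub_one_iff.mpr h3)
  obtain ⟨n, hn1, hn2⟩ := (h1.and h2).exists
  -- the relative entropy of the cube marginal is itself finite
  have hfin : relEnt (marginal μ (cube d n)) (Measure.pi fun _ : cube d n => p) < ⊤ := by
    by_contra hc
    rw [not_lt, top_le_iff] at hc
    rw [hc, ENNReal.top_div_of_ne_top
      (ENNReal.pow_ne_top (ENNReal.mul_ne_top ENNReal.ofNat_ne_top (ENNReal.natCast_ne_top n)))] at hn1
    exact absurd hn1 (lt_irrefl ⊤)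
  have hcond : marginal μ (cube d n) ≪ (Measure.pi fun _ : cube d n => p) ∧
      Integrable (llr (marginal μ (cube d n)) (Measure.pi fun _ : cube d n => p))
        (marginal μ (cube d n)) := by
    by_contra hc
    rw [relEnt, if_neg hc] at hfin
    exact absurd hfin (lt_irrefl ⊤)
  obtain ⟨hkey1, hkey2⟩ := key_step p μ hn2 hcond.1 hcond.2
  refine ⟨?_, hkey1⟩
  rw [relEnt, if_pos ⟨hkey1, hkey2⟩]
  exact ENNReal.ofReal_lt_top
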